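/- Closed form of the A₁ propagator series: for all real u < λ < μ, the series Σ_{k=0}^∞ (−1)^{k+1} I^{(k+1)}_{A₁}(u, μ) · I^{(−k)}_{A₁}(u, λ) = Σ_{k=0}^∞ (2k+1) (μ−u)^{−k−3/2} (λ−u)^{k−1/2} converges absolutely and its sum equals ((μ−u) + (λ−u)) / ( √((μ−u)(λ−u)) · (μ−λ)² ). (This is the commutator [∂_μ f̂₊^{A₁}(u,μ), ∂_λ f̂₋^{A₁}(u,λ)] for the A₁-singularity, i.e. the i = j case of the 2-form ω^{ij}(μ,λ) with trivial R-matrix.) -/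

import Mathlib

/-- The `A₁` period integrals `I^{(k)}_{A₁}(u, λ)`, for real `u < λ`:
`I^{(k)} = (−1)^k ((2k−1)!!/2^{k−1/2}) (λ−u)^{−k−1/2}` for `k ≥ 0`, and
`I^{(−m−1)} = 2 · (2^{m+1/2}/(2m+1)!!) (λ−u)^{m+1/2}` for `m ≥ 0`
(note that in both cases the exponent of `λ − u` is `−k − 1/2`). -/
noncomputable def IA1 (k : ℤ) (u l : ℝ) : ℝ :=
  if 0 ≤ k then
    (-1 : ℝ) ^ k * (Nat.doubleFactorial (2 * k.toNat - 1) : ℝ) / (2 : ℝ) ^ ((k : ℝ) - 1/2)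
      * (l - u) ^ (-(k : ℝ) - 1/2)
  else
    2 * (2 : ℝ) ^ (-(k : ℝ) - 1/2) / (Nat.doubleFactorial (2 * (-k - 1).toNat + 1) : ℝ)
      * (l - u) ^ (-(k : ℝ) - 1/2)

lemma df_step (k : ℕ) :
    (Nat.doubleFactorial (2 * k + 1) : ℝ) = (2 * k + 1) * Nat.doubleFactorial (2 * k - 1) := by
  rcases k with _ | n
  · simp [Nat.doubleFactorial]
  · have h : 2 * (n + 1) + 1 = (2 * n + 1) + 2 := by ring
    have h2 : 2 * (n + 1) - 1 = 2 * n + 1 := by omega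
    rw [h, h2, Nat.doubleFactorial]
    push_cast
    ring

lemma closed_form_algebra (a b sa sb : ℝ) (ha : 0 < a) (hb : 0 < b) (hba : b < a)
    (hsa : sa ≠ 0) (hsb : sb ≠ 0) :
    (1 + b / a) / (1 - b / a) ^ 2 * ((a * sa)⁻¹ * sb⁻¹) = (a + b) / (sa * sb * (a - b) ^ 2) := by
  have ha0 : a ≠ 0 := ha.ne'
  have hd : a - b ≠ 0 := by linarith
  have h1 : 1 - b / a = (a - b) / a := by field_simp
  rw [h1]
  field_simp

set_option maxHeartbeats 1000000 in
/-- Closed form of the `A₁` propagator series: for `u < λ < μ`, the series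
`Σ_{k≥0} (−1)^{k+1} I^{(k+1)}_{A₁}(u, μ) · I^{(−k)}_{A₁}(u, λ)
  = Σ_{k≥0} (2k+1)(μ−u)^{−k−3/2}(λ−u)^{k−1/2}`
converges absolutely, with sum `((μ−u)+(λ−u)) / (√((μ−u)(λ−u)) (μ−λ)²)`. -/
theorem A1_propagator_closed_form (u l m : ℝ) (h1 : u < l) (h2 : l < m) :
    (∀ k : ℕ, (-1 : ℝ) ^ (k + 1) * IA1 ((k : ℤ) + 1) u m * IA1 (-(k : ℤ)) u l
        = (2 * (k : ℝ) + 1) * (m - u) ^ (-(k : ℝ) - 3/2) * (l - u) ^ ((k : ℝ) - 1/2)) ∧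
    Summable (fun k : ℕ =>
        |(2 * (k : ℝ) + 1) * (m - u) ^ (-(k : ℝ) - 3/2) * (l - u) ^ ((k : ℝ) - 1/2)|) ∧
    ∑' k : ℕ, (2 * (k : ℝ) + 1) * (m - u) ^ (-(k : ℝ) - 3/2) * (l - u) ^ ((k : ℝ) - 1/2)
        = ((m - u) + (l - u)) / (Real.sqrt ((m - u) * (l - u)) * (m - l) ^ 2) := by
  have ha : (0:ℝ) < m - u := by linarith
  have hb : (0:ℝ) < l - u := by linarith
  have hab : l - u < m - u := by linarith
  -- part 1
  have part1 : ∀ k : ℕ, (-1 : ℝ) ^ (k + 1) * IA1 ((k : ℤ) + 1) u m * IA1 (-(k : ℤ)) u l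
      = (2 * (k : ℝ) + 1) * (m - u) ^ (-(k : ℝ) - 3/2) * (l - u) ^ ((k : ℝ) - 1/2) := by
    intro k
    have e1 : IA1 ((k : ℤ) + 1) u m
        = (-1 : ℝ) ^ (k + 1) * (Nat.doubleFactorial (2 * k + 1) : ℝ) / (2:ℝ) ^ ((k:ℝ) + 1/2)
          * (m - u) ^ (-(k : ℝ) - 3/2) := by
      rw [IA1, if_pos (by positivity)]
      have h1' : ((k : ℤ) + 1).toNat = k + 1 := by omega
      have h2' : 2 * (k + 1) - 1 = 2 * k + 1 := by omega
      have h3' : (((k : ℤ) + 1 : ℤ) : ℝ) = (k : ℝ) + 1 := by push_cast; ring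
      have h4' : (-1 : ℝ) ^ ((k : ℤ) + 1) = (-1 : ℝ) ^ (k + 1) := by
        rw [show ((k:ℤ)+1) = ((k+1 : ℕ) : ℤ) by push_cast; ring, zpow_natCast]
      rw [h1', h2', h3', h4']
      ring_nf
    have e2 : IA1 (-(k : ℤ)) u l
        = (2:ℝ) ^ ((k:ℝ) + 1/2) / (Nat.doubleFactorial (2 * k - 1) : ℝ)
          * (l - u) ^ ((k : ℝ) - 1/2) := by
      rcases k with _ | n
      · rw [IA1, if_pos (by norm_num)]
        norm_num [Nat.doubleFactorial, ← Real.rpow_neg]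
      · rw [IA1, if_neg (by omega)]
        have htn : (-(-((n+1:ℕ):ℤ)) - 1).toNat = n := by omega
        have h2n : 2 * (n+1) - 1 = 2 * n + 1 := by omega
        rw [htn, h2n]
        push_cast
        have key : (2:ℝ) * 2 ^ ((n:ℝ) + 1/2) = 2 ^ (((n:ℝ)+1) + 1/2) := by
          rw [show ((n:ℝ)+1)+1/2 = 1 + ((n:ℝ)+1/2) by ring,
            Real.rpow_add (by norm_num : (0:ℝ) < 2) 1 ((n:ℝ)+1/2), Real.rpow_one]
        rw [show (-(-((n:ℝ)+1)) - 1/2) = (n:ℝ) + 1/2 by ring, key]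
        ring_nf
    rw [e1, e2, df_step k]
    have h2ne : (2:ℝ)^((k:ℝ)+1/2) ≠ 0 := by positivity
    have hdfne : (Nat.doubleFactorial (2*k-1) : ℝ) ≠ 0 := by
      exact_mod_cast (Nat.doubleFactorial_pos _).ne'
    have hsq : (-1:ℝ)^(k+1) * (-1:ℝ)^(k+1) = 1 := by
      rw [← pow_add, show (k+1)+(k+1) = 2*(k+1) by ring, pow_mul]
      norm_num
    field_simp
    ring_nf
    rw [show k*2 = 2*k by ring, pow_mul]
    norm_num
  set x : ℝ := (l - u) / (m - u) with hxdef
  have hx0 : 0 ≤ x := by positivity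
  have hx1 : x < 1 := (div_lt_one ha).mpr hab
  have h1x : (0:ℝ) < 1 - x := by linarith
  have hgeo : HasSum (fun n : ℕ => x ^ n) (1 - x)⁻¹ := hasSum_geometric_of_lt_one hx0 hx1
  have hmul : HasSum (fun n : ℕ => (n : ℝ) * x ^ n) (x / (1 - x) ^ 2) :=
    hasSum_coe_mul_geometric_of_norm_lt_one (by rwa [Real.norm_eq_abs, abs_of_nonneg hx0])
  have hsum : HasSum (fun n : ℕ => (2 * (n : ℝ) + 1) * x ^ n) ((1 + x) / (1 - x) ^ 2) := by
    have h := (hmul.mul_left 2).add hgeo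
    have hval : 2 * (x / (1 - x) ^ 2) + (1 - x)⁻¹ = (1 + x) / (1 - x) ^ 2 := by
      field_simp
      ring
    rw [hval] at h
    rw [show (fun n : ℕ => (2 * (n : ℝ) + 1) * x ^ n) = fun b : ℕ => 2 * ((b : ℝ) * x ^ b) + x ^ b from
      funext fun n => by ring]
    exact h
  set c : ℝ := (m - u) ^ (-(3:ℝ)/2) * (l - u) ^ (-(1:ℝ)/2) with hcdef
  have hterm : ∀ k : ℕ, (2 * (k : ℝ) + 1) * (m - u) ^ (-(k : ℝ) - 3/2) * (l - u) ^ ((k : ℝ) - 1/2)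
      = (2 * (k : ℝ) + 1) * x ^ k * c := by
    intro k
    have hA : (m - u) ^ (-(k : ℝ) - 3/2) = ((m - u) ^ k)⁻¹ * (m - u) ^ (-(3:ℝ)/2) := by
      rw [show (-(k:ℝ) - 3/2) = (-(k:ℝ)) + (-(3:ℝ)/2) by ring,
        Real.rpow_add ha, Real.rpow_neg ha.le, Real.rpow_natCast]
    have hB : (l - u) ^ ((k : ℝ) - 1/2) = (l - u) ^ k * (l - u) ^ (-(1:ℝ)/2) := by
      rw [show ((k:ℝ) - 1/2) = (k:ℝ) + (-(1:ℝ)/2) by ring,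
        Real.rpow_add hb, Real.rpow_natCast]
    rw [hA, hB, hcdef, hxdef, div_pow]
    have hmk : ((m - u) ^ k : ℝ) ≠ 0 := by positivity
    field_simp
  have hS : HasSum
      (fun k : ℕ => (2 * (k : ℝ) + 1) * (m - u) ^ (-(k : ℝ) - 3/2) * (l - u) ^ ((k : ℝ) - 1/2))
      ((1 + x) / (1 - x) ^ 2 * c) := by
    simp only [hterm]
    exact hsum.mul_right c
  refine ⟨part1, hS.summable.abs, ?_⟩
  rw [hS.tsum_eq]
  rw [Real.sqrt_eq_rpow, Real.mul_rpow ha.le hb.le, show m - l = (m - u) - (l - u) by ring]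
  have ha32 : (m - u) ^ (-(3:ℝ)/2) = ((m - u) * (m - u) ^ ((1:ℝ)/2))⁻¹ := by
    rw [show (-(3:ℝ)/2) = -(1 + 1/2) by norm_num, Real.rpow_neg ha.le,
      Real.rpow_add ha 1 (1/2), Real.rpow_one]
  have hb12 : (l - u) ^ (-(1:ℝ)/2) = ((l - u) ^ ((1:ℝ)/2))⁻¹ := by
    rw [show (-(1:ℝ)/2) = -(1/2) by norm_num, Real.rpow_neg hb.le]
  have hsa : (0:ℝ) < (m - u) ^ ((1:ℝ)/2) := Real.rpow_pos_of_pos ha _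
  have hsb : (0:ℝ) < (l - u) ^ ((1:ℝ)/2) := Real.rpow_pos_of_pos hb _
  have hd : (0:ℝ) < (m - u) - (l - u) := by linarith
  rw [hcdef, ha32, hb12, hxdef]
  exact closed_form_algebra (m - u) (l - u) ((m-u)^((1:ℝ)/2)) ((l-u)^((1:ℝ)/2))
    ha hb hab hsa.ne' hsb.ne'
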